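/- Let Z ⊆ P^r be a complete intersection of dimension >= 0, with saturated homogeneous ideal I_Z generated by a regular sequence of homogeneous polynomials. Then for every a >= 1 the power I_Z^a is a saturated ideal (Zariski's theorem). -/

import Mathlib

/-!
Zariski's theorem: if `Z ⊆ ℙ^r` is a complete intersection of dimension `≥ 0`, whose
saturated homogeneous ideal `I_Z ⊆ S = ℂ[x₀,…,x_r]` is generated by a regular sequence
`f₁, …, f_e` of homogeneous polynomials of positive degrees (`e = codim Z ≤ r`), then for
every `a ≥ 1` the power `I_Z^a` is saturated.
-/

open MvPolynomial

noncomputable section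

/-- The polynomial ring `S = ℂ[x₀, …, x_r]` in `r + 1` variables. -/
abbrev PolyRing (r : ℕ) := MvPolynomial (Fin (r + 1)) ℂ

/-- The irrelevant maximal ideal `𝔪 = (x₀, …, x_r)`. -/
def irrelevantIdeal (r : ℕ) : Ideal (PolyRing r) :=
  Ideal.span (Set.range MvPolynomial.X)

/-- The saturation `sat(J) = { f | 𝔪^k · f ⊆ J for some k ≥ 0 }`. -/
def satIdeal {r : ℕ} (J : Ideal (PolyRing r)) : Ideal (PolyRing r) :=
  ⨆ k : ℕ, J.colon ((irrelevantIdeal r ^ k : Ideal (PolyRing r)) : Set (PolyRing r))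

namespace ZariskiCI


variable {A : Type*} [CommRing A]

/-- Ideal generated by the range of `f`. -/
def Ifull {n : ℕ} (f : Fin n → A) : Ideal A := Ideal.span (Set.range f)

/-- Ideal generated by a prefix of `f`. -/
def preId {n : ℕ} (f : Fin n → A) (k : ℕ) : Ideal A := Ideal.span (f '' {j | (j : ℕ) < k})

/-- Per-step colon regularity of the sequence `f`. -/
def Pcol {n : ℕ} (f : Fin n → A) : Prop :=
  ∀ (i : Fin n) (x : A), f i * x ∈ preId f i → x ∈ preId f i

lemma Ifull_comp_rev {n : ℕ} (f : Fin n → A) : Ifull (f ∘ Fin.rev) = Ifull f := by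
  unfold Ifull
  congr 1
  exact Fin.rev_surjective.range_comp f

lemma Ifull_castSucc_le {n : ℕ} (f : Fin (n + 1) → A) :
    Ifull (f ∘ Fin.castSucc) ≤ Ifull f := by
  apply Ideal.span_mono
  rintro x ⟨i, rfl⟩
  exact ⟨i.castSucc, rfl⟩

lemma mem_Ifull {n : ℕ} (f : Fin n → A) (i : Fin n) : f i ∈ Ifull f :=
  Ideal.subset_span ⟨i, rfl⟩

lemma preId_castSucc {n : ℕ} (f : Fin (n + 1) → A) (k : ℕ) (hk : k ≤ n) :
    preId (f ∘ Fin.castSucc) k = preId f k := by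
  unfold preId
  congr 1
  ext x
  constructor
  · rintro ⟨j, hj, rfl⟩; exact ⟨j.castSucc, hj, rfl⟩
  · rintro ⟨j, hj, rfl⟩
    refine ⟨⟨j, lt_of_lt_of_le hj hk⟩, hj, ?_⟩
    simp [Fin.castSucc, Fin.castAdd, Fin.castLE]

lemma Pcol_castSucc {n : ℕ} {f : Fin (n + 1) → A} (hf : Pcol f) : Pcol (f ∘ Fin.castSucc) := by
  intro i x hx
  have h1 : preId (f ∘ Fin.castSucc) i = preId f i.castSucc := by
    rw [preId_castSucc f i (le_of_lt i.2)]; rfl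
  rw [h1] at hx ⊢
  exact hf i.castSucc x hx

lemma preId_last {n : ℕ} (f : Fin (n + 1) → A) :
    preId f (n : ℕ) = Ifull (f ∘ Fin.castSucc) := by
  unfold preId Ifull
  congr 1
  ext x
  constructor
  · rintro ⟨j, hj, rfl⟩
    exact ⟨⟨j, hj⟩, by simp [Fin.castSucc, Fin.castAdd, Fin.castLE]⟩
  · rintro ⟨j, rfl⟩
    exact ⟨j.castSucc, j.2, rfl⟩

/-- support elements of a homogeneous polynomial have the right degree -/
lemma degree_eq_of_isHomogeneous {σ : Type*} {F : MvPolynomial σ A} {m : ℕ}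
    (hF : F.IsHomogeneous m) {d : σ →₀ ℕ} (hd : F.coeff d ≠ 0) : d.degree = m := by
  by_contra h
  exact hd (hF.coeff_eq_zero h)

lemma prod_pow_mem {ι : Type*} (I : Ideal A) (s : Finset ι) (g : ι → A) (e : ι → ℕ)
    (hg : ∀ i ∈ s, g i ∈ I) : (∏ i ∈ s, g i ^ e i) ∈ I ^ (∑ i ∈ s, e i) := by
  classical
  induction s using Finset.induction_on with
  | empty => simp
  | insert a s hx ih =>
    rw [Finset.prod_insert hx, Finset.sum_insert hx, pow_add]
    exact Ideal.mul_mem_mul (Ideal.pow_mem_pow (hg a (Finset.mem_insert_self a s)) _)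
      (ih fun i hi => hg i (Finset.mem_insert_of_mem hi))

lemma aeval_mem_pow {n : ℕ} (f : Fin n → A) {F : MvPolynomial (Fin n) A} {m : ℕ}
    (hF : F.IsHomogeneous m) : aeval f F ∈ (Ifull f) ^ m := by
  classical
  rw [← F.support_sum_monomial_coeff, map_sum]
  apply Ideal.sum_mem
  intro d hd
  rw [aeval_monomial]
  have hdeg : d.degree = m :=
    degree_eq_of_isHomogeneous hF (by simpa using hd)
  have : (d.prod fun i k => f i ^ k) ∈ (Ifull f) ^ m := by
    rw [Finsupp.prod]
    have h0 := prod_pow_mem (Ifull f) d.support f d (fun i _ => mem_Ifull f i)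
    have hdeg2 : ∑ i ∈ d.support, d i = m := hdeg
    rwa [hdeg2] at h0
  exact Ideal.mul_mem_left _ _ this

lemma aeval_mem_pow_succ {n : ℕ} (f : Fin n → A) {F : MvPolynomial (Fin n) A} {m : ℕ}
    (hF : F.IsHomogeneous m) (hc : ∀ d, F.coeff d ∈ Ifull f) :
    aeval f F ∈ (Ifull f) ^ (m + 1) := by
  classical
  rw [← F.support_sum_monomial_coeff, map_sum]
  apply Ideal.sum_mem
  intro d hd
  rw [aeval_monomial]
  have hdeg : d.degree = m :=
    degree_eq_of_isHomogeneous hF (by simpa using hd)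
  have h1 : (d.prod fun i k => f i ^ k) ∈ (Ifull f) ^ m := by
    rw [Finsupp.prod]
    have h0 := prod_pow_mem (Ifull f) d.support f d (fun i _ => mem_Ifull f i)
    have hdeg2 : ∑ i ∈ d.support, d i = m := hdeg
    rwa [hdeg2] at h0
  have h2 : (algebraMap A A) (F.coeff d) ∈ Ifull f := by
    simpa using hc d
  rw [pow_succ']
  exact Ideal.mul_mem_mul h2 h1

lemma exists_hom_of_mem_pow {n : ℕ} (f : Fin n → A) {x : A} {m : ℕ}
    (hx : x ∈ (Ifull f) ^ m) : ∃ F : MvPolynomial (Fin n) A, F.IsHomogeneous m ∧ aeval f F = x := by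
  classical
  induction m generalizing x with
  | zero =>
    exact ⟨C x, isHomogeneous_C _ _, by simp⟩
  | succ m ih =>
    rw [pow_succ] at hx
    induction hx using Submodule.mul_induction_on' with
    | mem_mul_mem y hy z hz =>
      obtain ⟨F, hF, hFe⟩ := ih hy
      rw [Ifull, ← Ideal.submodule_span_eq, Submodule.mem_span_range_iff_exists_fun] at hz
      obtain ⟨c, hc⟩ := hz
      refine ⟨F * ∑ i, C (c i) * X i, ?_, ?_⟩
      · have : (∑ i, C (c i) * X i : MvPolynomial (Fin n) A).IsHomogeneous 1 :=
          IsHomogeneous.sum _ _ _ fun i _ => isHomogeneous_C_mul_X _ _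
        exact hF.mul this
      · rw [map_mul, hFe]
        have hz2 : aeval f (∑ i, C (c i) * X i) = z := by
          simp only [map_sum, map_mul, aeval_C, aeval_X, Algebra.algebraMap_self,
            RingHom.id_apply]
          simpa [smul_eq_mul] using hc
        rw [hz2]
    | add y hy z hz ihy ihz =>
      obtain ⟨F, hF, hFe⟩ := ihy
      obtain ⟨G, hG, hGe⟩ := ihz
      exact ⟨F + G, hF.add hG, by rw [map_add, hFe, hGe]⟩

lemma exists_hom_coeff_mem {n : ℕ} (f : Fin n → A) {x : A} {m : ℕ}
    (hx : x ∈ (Ifull f) ^ (m + 1)) :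
    ∃ G : MvPolynomial (Fin n) A, G.IsHomogeneous m ∧ aeval f G = x ∧
      ∀ d, G.coeff d ∈ Ifull f := by
  classical
  rw [pow_succ'] at hx
  induction hx using Submodule.mul_induction_on' with
  | mem_mul_mem z hz y hy =>
    obtain ⟨F, hF, hFe⟩ := exists_hom_of_mem_pow f hy
    refine ⟨C z * F, hF.C_mul z, by rw [map_mul, aeval_C, hFe]; simp, fun d => ?_⟩
    rw [coeff_C_mul]
    exact Ideal.mul_mem_right _ _ hz
  | add y hy z hz ihy ihz =>
    obtain ⟨F, hF, hFe, hFc⟩ := ihy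
    obtain ⟨G, hG, hGe, hGc⟩ := ihz
    exact ⟨F + G, hF.add hG, by rw [map_add, hFe, hGe], fun d => by
      rw [coeff_add]; exact Ideal.add_mem _ (hFc d) (hGc d)⟩


section Split
variable {n : ℕ}

lemma degree_fin {k : ℕ} (d : Fin k →₀ ℕ) : d.degree = ∑ i, d i := by
  rw [Finsupp.degree_apply, Finset.sum_subset (Finset.subset_univ d.support)]
  intro x _ hx
  simpa using Finsupp.notMem_support_iff.mp hx

/-- Splitting off the variable `0`. -/
lemma exists_split (F : MvPolynomial (Fin (n + 1)) A) :
    ∃ P₀ : MvPolynomial (Fin n) A, ∃ Q : MvPolynomial (Fin (n + 1)) A,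
      F = rename Fin.succ P₀ + X 0 * Q ∧
      (∀ a, F.IsHomogeneous a → P₀.IsHomogeneous a) ∧
      (∀ a, F.IsHomogeneous (a + 1) → Q.IsHomogeneous a) := by
  classical
  have hinj : Function.Injective (Fin.succ : Fin n → Fin (n + 1)) := Fin.succ_injective n
  set s₀ := F.support.filter (fun m => m 0 = 0) with hs₀
  set s₁ := F.support.filter (fun m => ¬ (m 0 = 0)) with hs₁
  have hsub : ∀ m ∈ s₀, ↑(m.support) ⊆ Set.range (Fin.succ : Fin n → Fin (n + 1)) := by
    intro m hm j hj
    have hm0 : m 0 = 0 := (Finset.mem_filter.mp hm).2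
    have hj0 : j ≠ 0 := by
      rintro rfl
      exact absurd hm0 (Finsupp.mem_support_iff.mp hj)
    obtain ⟨i, hi⟩ := Fin.exists_succ_eq.mpr hj0
    exact ⟨i, hi⟩
  refine ⟨∑ m ∈ s₀.attach, monomial
      (Finsupp.comapDomain Fin.succ (m : Fin (n+1) →₀ ℕ) hinj.injOn) (F.coeff m),
    ∑ m ∈ s₁, monomial (m - Finsupp.single 0 1) (F.coeff m), ?_, ?_, ?_⟩
  · rw [map_sum]
    have h₀ : ∀ m ∈ s₀.attach, rename Fin.succ
        (monomial (Finsupp.comapDomain Fin.succ (m : Fin (n+1) →₀ ℕ) hinj.injOn)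
          (F.coeff m)) = monomial (m : Fin (n+1) →₀ ℕ) (F.coeff m) := by
      intro m _
      rw [rename_monomial, Finsupp.mapDomain_comapDomain _ hinj _ (hsub m m.2)]
    rw [Finset.sum_congr rfl h₀]
    rw [Finset.mul_sum]
    have h₁ : ∀ m ∈ s₁, X 0 * monomial (m - Finsupp.single 0 1) (F.coeff m)
        = monomial m (F.coeff m) := by
      intro m hm
      have hm0 : m 0 ≠ 0 := (Finset.mem_filter.mp hm).2
      have hexp : Finsupp.single (0 : Fin (n+1)) 1 + (m - Finsupp.single 0 1) = m := by
        ext j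
        rcases eq_or_ne j 0 with rfl | hj
        · simp only [Finsupp.add_apply, Finsupp.single_eq_same, Finsupp.tsub_apply]
          omega
        · simp [Finsupp.single_eq_of_ne' (Ne.symm hj)]
      rw [X, monomial_mul, one_mul, hexp]
    rw [Finset.sum_congr rfl h₁]
    rw [Finset.sum_attach s₀ (fun m => monomial m (F.coeff m))]
    rw [hs₀, hs₁, Finset.sum_filter_add_sum_filter_not]
    exact (F.support_sum_monomial_coeff).symm
  · intro a hF
    apply IsHomogeneous.sum
    intro m _
    apply isHomogeneous_monomial
    have hdm : (m : Fin (n+1) →₀ ℕ).degree = a :=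
      degree_eq_of_isHomogeneous hF
        (by simpa using (Finset.mem_filter.mp m.2).1)
    have hm0 : (m : Fin (n+1) →₀ ℕ) 0 = 0 := (Finset.mem_filter.mp m.2).2
    rw [degree_fin] at hdm ⊢
    rw [Fin.sum_univ_succ, hm0, zero_add] at hdm
    simpa [Finsupp.comapDomain_apply] using hdm
  · intro a hF
    apply IsHomogeneous.sum
    intro m hm
    apply isHomogeneous_monomial
    have hdm : m.degree = a + 1 :=
      degree_eq_of_isHomogeneous hF (by simpa using (Finset.mem_filter.mp hm).1)
    have hm0 : m 0 ≠ 0 := (Finset.mem_filter.mp hm).2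
    rw [degree_fin] at hdm ⊢
    rw [Fin.sum_univ_succ] at hdm ⊢
    have hth : ∀ i : Fin n, ((m - Finsupp.single 0 1 : Fin (n+1) →₀ ℕ)) i.succ = m i.succ := by
      intro i
      rw [Finsupp.tsub_apply, Finsupp.single_apply,
        if_neg (Ne.symm (Fin.succ_ne_zero i)), Nat.sub_zero]
    rw [Finset.sum_congr rfl (fun i _ => hth i)]
    simp only [Finsupp.tsub_apply, Finsupp.single_eq_same]
    omega

end Split

section QR
variable {n : ℕ}

lemma eq_C_of_hom0 {σ : Type*} {p : MvPolynomial σ A} (hp : p.IsHomogeneous 0) :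
    p = C (p.coeff 0) := by
  classical
  ext d
  rw [coeff_C]
  split_ifs with h
  · rw [← h]
  · exact hp.coeff_eq_zero fun hd => h ((Finsupp.degree_eq_zero_iff d).mp hd).symm

/-- The `K`-lemma: a regular element mod `I` stays regular mod powers of `I`,
assuming quasi-regularity holds for `f`. -/
lemma Klem (f : Fin n → A) (g : A)
    (hg : ∀ x, g * x ∈ Ifull f → x ∈ Ifull f)
    (Hqr : ∀ (a : ℕ) (F : MvPolynomial (Fin n) A), F.IsHomogeneous a →
      aeval (f ∘ Fin.rev) F ∈ (Ifull f) ^ (a + 1) → ∀ d, F.coeff d ∈ Ifull f) :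
    ∀ (b : ℕ) (x : A), g * x ∈ (Ifull f) ^ b → x ∈ (Ifull f) ^ b := by
  intro b
  induction b with
  | zero => simp
  | succ b ih =>
    intro x hx
    have hxb : x ∈ (Ifull f) ^ b :=
      ih x (Ideal.pow_le_pow_right (Nat.le_succ b) hx)
    obtain ⟨F, hF, hFe⟩ := exists_hom_of_mem_pow f hxb
    set F' := rename Fin.rev F with hF'def
    have hF' : F'.IsHomogeneous b := hF.rename_isHomogeneous
    have hcomp : (f ∘ Fin.rev) ∘ Fin.rev = f := by
      funext i; simp [Function.comp, Fin.rev_rev]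
    have hFe' : aeval (f ∘ Fin.rev) F' = x := by
      rw [hF'def, aeval_rename, hcomp, hFe]
    have hmem : aeval (f ∘ Fin.rev) (C g * F') ∈ (Ifull f) ^ (b + 1) := by
      rw [map_mul, aeval_C, hFe']
      simpa using hx
    have hco := Hqr b (C g * F') (hF'.C_mul g) hmem
    have hcoF : ∀ d, F'.coeff d ∈ Ifull (f ∘ Fin.rev) := by
      intro d
      have h1 := hco d
      rw [coeff_C_mul] at h1
      rw [Ifull_comp_rev]
      exact hg _ h1
    have h2 := aeval_mem_pow_succ (f ∘ Fin.rev) hF' hcoF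
    rw [Ifull_comp_rev, hFe'] at h2
    exact h2

/-- Quasi-regularity: homogeneous forms evaluating into `I^(a+1)` have coefficients in `I`. -/
theorem qrM : ∀ (n : ℕ) (f : Fin n → A), Pcol f →
    ∀ (a : ℕ) (F : MvPolynomial (Fin n) A), F.IsHomogeneous a →
      aeval (f ∘ Fin.rev) F ∈ (Ifull f) ^ (a + 1) → ∀ d, F.coeff d ∈ Ifull f := by
  intro n
  induction n with
  | zero =>
    intro f hf a F hF hmem d
    have hFC : F = C (F.coeff 0) := by
      ext d'
      have : d' = 0 := Subsingleton.elim _ _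
      rw [this, coeff_C]
      simp
    have hc : F.coeff 0 ∈ Ifull f := by
      have : aeval (f ∘ Fin.rev) F = F.coeff 0 := by
        rw [hFC]; simp
      rw [this] at hmem
      exact Ideal.pow_le_self (Nat.succ_ne_zero a) hmem
    have hd : d = 0 := Subsingleton.elim _ _
    rw [hd]
    exact hc
  | succ n IH =>
    intro f hf a
    induction a using Nat.strong_induction_on with
    | _ a iha =>
      intro F hF hmem
      rw [← Ifull_comp_rev f] at hmem
      obtain ⟨G, hG, hGe, hGc⟩ := exists_hom_coeff_mem (f ∘ Fin.rev) hmem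
      rw [Ifull_comp_rev] at hGc
      suffices h0 : ∀ d, (F - G).coeff d ∈ Ifull f by
        intro d
        have := add_mem (h0 d) (hGc d)
        rwa [coeff_sub, sub_add_cancel] at this
      have hF₀ : (F - G).IsHomogeneous a := hF.sub hG
      have hev0 : aeval (f ∘ Fin.rev) (F - G) = 0 := by
        rw [map_sub, hGe, sub_self]
      rcases a with _ | b
      · -- degree 0
        intro d
        rw [eq_C_of_hom0 hF₀]
        have hc0 : (F - G).coeff 0 = 0 := by
          have := hev0
          rw [eq_C_of_hom0 hF₀] at this
          simpa using this
        rw [hc0]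
        simp
      · -- degree b + 1 : split off variable 0
        obtain ⟨P₀, Q, hsplit, hhomP, hhomQ⟩ := exists_split (F - G)
        have hP : P₀.IsHomogeneous (b + 1) := hhomP _ hF₀
        have hQ : Q.IsHomogeneous b := hhomQ _ hF₀
        set f' := f ∘ Fin.castSucc with hf'def
        have hf' : Pcol f' := Pcol_castSucc hf
        have hlast : ∀ x, f (Fin.last n) * x ∈ Ifull f' → x ∈ Ifull f' := by
          intro x hx
          have hpre : preId f (Fin.last n : Fin (n+1)) = Ifull f' := preId_last f
          rw [← hpre] at hx ⊢
          exact hf (Fin.last n) x hx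
        have hcomp1 : (f ∘ Fin.rev) ∘ Fin.succ = f' ∘ Fin.rev := by
          funext i
          simp only [Function.comp, hf'def]
          rw [Fin.rev_succ]
        have hrev0 : (f ∘ Fin.rev) 0 = f (Fin.last n) := by
          simp [Function.comp, Fin.rev_zero]
        have heval : aeval (f' ∘ Fin.rev) P₀ + f (Fin.last n) * aeval (f ∘ Fin.rev) Q = 0 := by
          have h0 := hev0
          rw [hsplit, map_add, map_mul, aeval_rename, hcomp1, aeval_X, hrev0] at h0
          exact h0
        have hPmem : aeval (f' ∘ Fin.rev) P₀ ∈ (Ifull f') ^ (b + 1) := by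
          have := aeval_mem_pow (f' ∘ Fin.rev) hP
          rwa [Ifull_comp_rev] at this
        have hprod : f (Fin.last n) * aeval (f ∘ Fin.rev) Q ∈ (Ifull f') ^ (b + 1) := by
          have : f (Fin.last n) * aeval (f ∘ Fin.rev) Q = - aeval (f' ∘ Fin.rev) P₀ := by
            linear_combination heval
          rw [this]
          exact neg_mem hPmem
        have hQmem : aeval (f ∘ Fin.rev) Q ∈ (Ifull f') ^ (b + 1) :=
          Klem f' (f (Fin.last n)) hlast (IH f' hf') (b + 1) _ hprod
        have hQc : ∀ d, Q.coeff d ∈ Ifull f := by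
          apply iha b (Nat.lt_succ_self b) Q hQ
          exact Ideal.pow_right_mono (Ifull_castSucc_le f) (b + 1) hQmem
        obtain ⟨R, hR, hRe⟩ := exists_hom_of_mem_pow (f' ∘ Fin.rev)
          (x := aeval (f ∘ Fin.rev) Q) (by rwa [Ifull_comp_rev])
        have hPR : aeval (f' ∘ Fin.rev) (P₀ + C (f (Fin.last n)) * R) = 0 := by
          rw [map_add, map_mul, aeval_C, hRe]
          simpa using heval
        have hPRc := IH f' hf' (b + 1) (P₀ + C (f (Fin.last n)) * R)
          (hP.add (hR.C_mul _)) (by rw [hPR]; exact zero_mem _)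
        have hPc : ∀ d, P₀.coeff d ∈ Ifull f := by
          intro d
          have h1 := Ifull_castSucc_le f (hPRc d)
          rw [coeff_add, coeff_C_mul] at h1
          have h2 : P₀.coeff d = (P₀.coeff d + f (Fin.last n) * R.coeff d)
              - f (Fin.last n) * R.coeff d := by ring
          rw [h2]
          exact sub_mem h1 (Ideal.mul_mem_right _ _ (mem_Ifull f (Fin.last n)))
        intro d
        rw [hsplit, coeff_add]
        apply add_mem
        · by_cases h : (rename Fin.succ P₀).coeff d = 0
          · rw [h]; exact zero_mem _
          · obtain ⟨u, hu, _⟩ := coeff_rename_ne_zero _ _ _ h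
            rw [← hu, coeff_rename_mapDomain _ (Fin.succ_injective n)]
            exact hPc u
        · classical
          rw [coeff_X_mul']
          split_ifs
          · exact hQc _
          · exact zero_mem _

end QR


variable {r : ℕ}

lemma mem_irrelevant_of_hom {p : PolyRing r} {d : ℕ} (hd : 0 < d)
    (hp : p.IsHomogeneous d) : p ∈ irrelevantIdeal r := by
  unfold irrelevantIdeal
  rw [← Set.image_univ, mem_ideal_span_X_image]
  intro m hm
  have hdeg : m.degree = d := by
    by_contra h
    exact (MvPolynomial.mem_support_iff.mp hm) (hp.coeff_eq_zero h)
  by_contra h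
  push_neg at h
  have : m = 0 := by
    ext i
    simpa using h i (Set.mem_univ i)
  rw [this] at hdeg
  simp at hdeg
  omega

section Swap
variable {J : Ideal (PolyRing r)} {a b : PolyRing r}

/-- If `a` is regular mod `J` and `b` is regular mod `J + (a)`,
then `a` is regular mod `J + (b)`. No grading needed. -/
lemma swap_colon_right
    (h1 : ∀ x, a * x ∈ J → x ∈ J)
    (h2 : ∀ x, b * x ∈ J ⊔ Ideal.span {a} → x ∈ J ⊔ Ideal.span {a}) :
    ∀ x, a * x ∈ J ⊔ Ideal.span {b} → x ∈ J ⊔ Ideal.span {b} := by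
  intro x hx
  rw [Submodule.mem_sup] at hx
  obtain ⟨j, hj, v, hv, hax⟩ := hx
  rw [Ideal.mem_span_singleton'] at hv
  obtain ⟨z, rfl⟩ := hv
  have hbz : b * z ∈ J ⊔ Ideal.span {a} := by
    have : b * z = a * x - j := by linear_combination hax
    rw [this]
    exact Submodule.sub_mem _
      (Submodule.mem_sup_right (Ideal.mem_span_singleton'.mpr ⟨x, mul_comm x a⟩))
      (Submodule.mem_sup_left hj)
  have hz : z ∈ J ⊔ Ideal.span {a} := h2 z hbz
  rw [Submodule.mem_sup] at hz
  obtain ⟨j', hj', w, hw, hzeq⟩ := hz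
  rw [Ideal.mem_span_singleton'] at hw
  obtain ⟨y, rfl⟩ := hw
  have key : a * (x - b * y) ∈ J := by
    have : a * (x - b * y) = j + b * j' := by linear_combination -hax - b * hzeq
    rw [this]
    exact Ideal.add_mem _ hj (Ideal.mul_mem_left _ _ hj')
  have hxby : x - b * y ∈ J := h1 _ key
  have : x = (x - b * y) + b * y := by ring
  rw [this]
  exact Submodule.add_mem _ (Submodule.mem_sup_left hxby)
    (Submodule.mem_sup_right (Ideal.mem_span_singleton'.mpr ⟨y, mul_comm y b⟩))

/-- Socle-transfer: if `a, b` are regular mod `J`, `a ∈ 𝔪`, and `J + (a)` has zero socle,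
then `J + (b)` has zero socle. -/
lemma socle_transfer
    (h1 : ∀ x, a * x ∈ J → x ∈ J)
    (h2 : ∀ x, b * x ∈ J → x ∈ J)
    (hma : a ∈ irrelevantIdeal r)
    (hsoc : ∀ x, (∀ t ∈ irrelevantIdeal r, x * t ∈ J ⊔ Ideal.span {a}) →
      x ∈ J ⊔ Ideal.span {a}) :
    ∀ x, (∀ t ∈ irrelevantIdeal r, x * t ∈ J ⊔ Ideal.span {b}) →
      x ∈ J ⊔ Ideal.span {b} := by
  intro x hx
  have hxa : x * a ∈ J ⊔ Ideal.span {b} := hx a hma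
  rw [Submodule.mem_sup] at hxa
  obtain ⟨j, hj, v, hv, hax⟩ := hxa
  rw [Ideal.mem_span_singleton'] at hv
  obtain ⟨x', rfl⟩ := hv
  -- x' is in the socle of J + (a)
  have hx'soc : ∀ t ∈ irrelevantIdeal r, x' * t ∈ J ⊔ Ideal.span {a} := by
    intro t ht
    have hxt : x * t ∈ J ⊔ Ideal.span {b} := hx t ht
    rw [Submodule.mem_sup] at hxt
    obtain ⟨jt, hjt, w, hw, hxteq⟩ := hxt
    rw [Ideal.mem_span_singleton'] at hw
    obtain ⟨zt, rfl⟩ := hw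
    have hkey : b * (t * x' - a * zt) ∈ J := by
      have : b * (t * x' - a * zt) = a * jt - t * j := by
        linear_combination t * hax - a * hxteq
      rw [this]
      exact Submodule.sub_mem _ (Ideal.mul_mem_left _ _ hjt) (Ideal.mul_mem_left _ _ hj)
    have := h2 _ hkey
    have hrw : x' * t = (t * x' - a * zt) + a * zt := by ring
    rw [hrw]
    exact Submodule.add_mem _ (Submodule.mem_sup_left this)
      (Submodule.mem_sup_right (Ideal.mem_span_singleton'.mpr ⟨zt, mul_comm zt a⟩))
  have hx' : x' ∈ J ⊔ Ideal.span {a} := hsoc x' hx'soc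
  rw [Submodule.mem_sup] at hx'
  obtain ⟨j', hj', w, hw, hx'eq⟩ := hx'
  rw [Ideal.mem_span_singleton'] at hw
  obtain ⟨z, rfl⟩ := hw
  have hkey2 : a * (x - b * z) ∈ J := by
    have : a * (x - b * z) = j + b * j' := by
      linear_combination -hax - b * hx'eq
    rw [this]
    exact Ideal.add_mem _ hj (Ideal.mul_mem_left _ _ hj')
  have := h1 _ hkey2
  have hrw : x = (x - b * z) + b * z := by ring
  rw [hrw]
  exact Submodule.add_mem _ (Submodule.mem_sup_left this)
    (Submodule.mem_sup_right (Ideal.mem_span_singleton'.mpr ⟨z, mul_comm z b⟩))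

end Swap

section Avoid

/-- A vector space over `ℂ` is not covered by finitely many subspaces avoiding
the spanning set. -/
lemma vs_avoid {M : Type*} [AddCommGroup M] [Module ℂ M] {k : ℕ} (v : Fin (k + 1) → M) :
    ∀ L : List (Submodule ℂ M), (∀ P ∈ L, ∃ i, v i ∉ P) →
      ∃ w ∈ Submodule.span ℂ (Set.range v), ∀ P ∈ L, w ∉ P := by
  classical
  intro L
  induction L with
  | nil => exact fun _ => ⟨v 0, Submodule.subset_span ⟨0, rfl⟩, by simp⟩
  | cons P L ih =>
    intro hL
    obtain ⟨w, hwspan, hw⟩ := ih fun Q hQ => hL Q (List.mem_cons_of_mem P hQ)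
    by_cases hwP : w ∉ P
    · refine ⟨w, hwspan, ?_⟩
      intro Q hQ
      rcases List.mem_cons.mp hQ with rfl | hQ
      · exact hwP
      · exact hw Q hQ
    · push_neg at hwP
      obtain ⟨i, hu⟩ := hL P List.mem_cons_self
      set u := v i with hudef
      have husp : u ∈ Submodule.span ℂ (Set.range v) := Submodule.subset_span ⟨i, rfl⟩
      -- bad scalars
      have hbad : Set.Finite ({0} ∪ ⋃ Q ∈ L.toFinset, {c : ℂ | w + c • u ∈ Q}) := by
        apply Set.Finite.union (Set.finite_singleton 0)
        apply Set.Finite.biUnion (L.toFinset.finite_toSet)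
        intro Q hQ
        apply Set.Subsingleton.finite
        intro c₁ h₁ c₂ h₂
        by_contra hne
        have hsub : (c₁ - c₂) • u ∈ Q := by
          have : (c₁ - c₂) • u = (w + c₁ • u) - (w + c₂ • u) := by
            rw [sub_smul]; abel
          rw [this]
          exact Submodule.sub_mem _ h₁ h₂
        have huQ : u ∈ Q := by
          rwa [Submodule.smul_mem_iff _ (sub_ne_zero_of_ne hne)] at hsub
        have hwQ : w ∈ Q := by
          have := Submodule.sub_mem _ h₁ (Submodule.smul_mem _ c₁ huQ)
          simpa using this
        exact hw Q (List.mem_toFinset.mp hQ) hwQ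
      obtain ⟨c, hc⟩ := hbad.infinite_compl.nonempty
      simp only [Set.mem_compl_iff, Set.mem_union, Set.mem_singleton_iff, Set.mem_iUnion,
        not_or, not_exists] at hc
      obtain ⟨hc0, hcQ⟩ := hc
      refine ⟨w + c • u, Submodule.add_mem _ hwspan (Submodule.smul_mem _ c husp), ?_⟩
      intro Q hQ
      rcases List.mem_cons.mp hQ with rfl | hQ'
      · intro hmem
        have : c • u ∈ Q := by
          have := Submodule.sub_mem _ hmem hwP
          simpa using this
        exact hu (by rwa [Submodule.smul_mem_iff _ hc0] at this)
      · intro hmem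
        exact hcQ Q (List.mem_toFinset.mpr hQ') hmem

variable {r : ℕ}

/-- For a "socle-zero" ideal `K`, there are finitely many `ℂ`-subspaces (the radicals of a
minimal primary decomposition) such that any element avoiding all of them is regular mod `K`,
and none of them contains all the variables. -/
lemma exists_bad (K : Ideal (PolyRing r))
    (hsoc : ∀ x, (∀ t ∈ irrelevantIdeal r, x * t ∈ K) → x ∈ K) :
    ∃ PS : List (Submodule ℂ (PolyRing r)),
      (∀ P ∈ PS, ∃ i, (X i : PolyRing r) ∉ P) ∧
      (∀ h : PolyRing r, (∀ P ∈ PS, h ∉ P) → ∀ x, h * x ∈ K → x ∈ K) := by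
  classical
  obtain ⟨s, hs, hsp⟩ := Submodule.isLasker (PolyRing r) (PolyRing r) K
  obtain ⟨t, hts, htinf, hterase⟩ := Ideal.decomposition_erase_inf hs
  refine ⟨t.toList.map fun Q => (Ideal.radical Q).restrictScalars ℂ, ?_, ?_⟩
  · intro P hP
    rw [List.mem_map] at hP
    obtain ⟨Q, hQ, rfl⟩ := hP
    rw [Finset.mem_toList] at hQ
    by_contra h
    push_neg at h
    have hmrad : irrelevantIdeal r ≤ Q.radical := by
      unfold irrelevantIdeal
      rw [Ideal.span_le]
      rintro x ⟨i, rfl⟩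
      exact h i
    obtain ⟨nn, hnn⟩ := Ideal.exists_pow_le_of_le_radical_of_fg hmrad
      (IsNoetherian.noetherian _)
    -- irredundancy gives an element
    obtain ⟨y, hy, hyQ⟩ := SetLike.not_le_iff_exists.mp (hterase hQ)
    have hyK : y ∉ K := by
      intro hyK
      rw [← htinf] at hyK
      exact hyQ ((Finset.inf_le (f := id) hQ) hyK)
    have hP : ∃ m : ℕ, irrelevantIdeal r ^ m * Ideal.span {y} ≤ K := by
      refine ⟨nn, ?_⟩
      rw [← htinf]
      apply Finset.le_inf
      intro Q' hQ'
      rcases eq_or_ne Q' Q with rfl | hne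
      · calc irrelevantIdeal r ^ nn * Ideal.span {y} ≤ irrelevantIdeal r ^ nn * ⊤ :=
              Ideal.mul_mono_right le_top
          _ = irrelevantIdeal r ^ nn := Ideal.mul_top _
          _ ≤ Q' := hnn
      · have hyQ' : y ∈ Q' := by
          have : Q' ∈ t.erase Q := Finset.mem_erase.mpr ⟨hne, hQ'⟩
          exact (Finset.inf_le (f := id) this) hy
        calc irrelevantIdeal r ^ nn * Ideal.span {y} ≤ ⊤ * Ideal.span {y} :=
              Ideal.mul_mono_left le_top
          _ = Ideal.span {y} := Ideal.top_mul _
          _ ≤ Q' := (Ideal.span_singleton_le_iff_mem _).mpr hyQ'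
    set n₀ := Nat.find hP with hn₀
    have hspec := Nat.find_spec hP
    have hpos : 0 < n₀ := by
      rcases Nat.eq_zero_or_pos n₀ with h0 | h
      · exfalso
        rw [← hn₀] at hspec
        rw [h0] at hspec
        rw [pow_zero, one_mul, Ideal.span_singleton_le_iff_mem] at hspec
        exact hyK hspec
      · exact h
    have hmin := Nat.find_min hP (Nat.sub_lt hpos one_pos)
    obtain ⟨z, hz, hzK⟩ := SetLike.not_le_iff_exists.mp hmin
    have hzsoc : ∀ u ∈ irrelevantIdeal r, z * u ∈ K := by
      intro u hu
      have h1 : z * u ∈ (irrelevantIdeal r ^ (n₀ - 1) * Ideal.span {y}) * irrelevantIdeal r :=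
        Ideal.mul_mem_mul hz hu
      have h2 : (irrelevantIdeal r ^ (n₀ - 1) * Ideal.span {y}) * irrelevantIdeal r
          = irrelevantIdeal r ^ n₀ * Ideal.span {y} := by
        rw [mul_right_comm, ← pow_succ, Nat.sub_add_cancel hpos]
      rw [h2] at h1
      exact hspec h1
    exact hzK (hsoc z hzsoc)
  · intro h hh x hx
    by_contra hxKn
    have hex : ∃ Q ∈ t, x ∉ Q := by
      by_contra hall
      push_neg at hall
      apply hxKn
      rw [← htinf, Submodule.mem_finsetInf]
      exact fun Q hQ => hall Q hQ
    obtain ⟨Q, hQt, hxQ⟩ := hex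
    have hhxQ : x * h ∈ Q := by
      rw [mul_comm]
      rw [← htinf] at hx
      exact (Finset.inf_le (f := id) hQt) hx
    have hprim := hsp (hts hQt)
    rcases (Ideal.isPrimary_iff.mp hprim).2 hhxQ with hcase | hcase
    · exact hxQ hcase
    · refine hh ((Ideal.radical Q).restrictScalars ℂ) ?_ hcase
      rw [List.mem_map]
      exact ⟨Q, Finset.mem_toList.mpr hQt, rfl⟩

/-- Given finitely many socle-zero ideals, there is a single linear form regular mod each. -/
lemma exists_linear_regular (Ks : List (Ideal (PolyRing r)))
    (hK : ∀ K ∈ Ks, ∀ x, (∀ t ∈ irrelevantIdeal r, x * t ∈ K) → x ∈ K) :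
    ∃ h : PolyRing r, h.IsHomogeneous 1 ∧ h ∈ irrelevantIdeal r ∧
      ∀ K ∈ Ks, ∀ x, h * x ∈ K → x ∈ K := by
  have hPS : (∀ K ∈ Ks, ∀ x, (∀ t ∈ irrelevantIdeal r, x * t ∈ K) → x ∈ K) →
      ∃ PS : List (Submodule ℂ (PolyRing r)),
      (∀ P ∈ PS, ∃ i, (X i : PolyRing r) ∉ P) ∧
      (∀ h : PolyRing r, (∀ P ∈ PS, h ∉ P) → ∀ K ∈ Ks, ∀ x, h * x ∈ K → x ∈ K) := by
    clear hK
    induction Ks with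
    | nil => exact fun _ => ⟨[], by simp, by simp⟩
    | cons K Ks ih =>
      intro hK
      have hKK := hK K List.mem_cons_self
      obtain ⟨PS₁, hPS₁, hreg₁⟩ := exists_bad K hKK
      obtain ⟨PS₂, hPS₂, hreg₂⟩ := ih fun K' hK' => hK K' (List.mem_cons_of_mem K hK')
      refine ⟨PS₁ ++ PS₂, ?_, ?_⟩
      · intro P hP
        rcases List.mem_append.mp hP with h | h
        · exact hPS₁ P h
        · exact hPS₂ P h
      · intro h hh K' hK' x hx
        rcases List.mem_cons.mp hK' with rfl | hK''
        · exact hreg₁ h (fun P hP => hh P (List.mem_append_left _ hP)) x hx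
        · exact hreg₂ h (fun P hP => hh P (List.mem_append_right _ hP)) K' hK'' x hx
  obtain ⟨PS, hPSX, hPSreg⟩ := hPS hK
  obtain ⟨w, hwspan, hw⟩ := vs_avoid (X : Fin (r + 1) → PolyRing r) PS
    (fun P hP => hPSX P hP)
  refine ⟨w, ?_, ?_, fun K hKs x hx => hPSreg w (fun P hP => hw P hP) K hKs x hx⟩
  · have : Submodule.span ℂ (Set.range (X : Fin (r+1) → PolyRing r)) ≤
        homogeneousSubmodule (Fin (r+1)) ℂ 1 := by
      rw [Submodule.span_le]
      rintro p ⟨i, rfl⟩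
      rw [SetLike.mem_coe, mem_homogeneousSubmodule]
      exact isHomogeneous_X _ _
    rw [← mem_homogeneousSubmodule]
    exact this hwspan
  · have : Submodule.span ℂ (Set.range (X : Fin (r+1) → PolyRing r)) ≤
        (irrelevantIdeal r).restrictScalars ℂ := by
      rw [Submodule.span_le]
      rintro p ⟨i, rfl⟩
      exact Ideal.subset_span ⟨i, rfl⟩
    exact this hwspan

end Avoid

section Depth
variable {r : ℕ}

/-- A chain of successively regular elements mod `J`. -/
def RegChain (J : Ideal (PolyRing r)) : List (PolyRing r) → Prop
  | [] => True
  | g :: l => (∀ x, g * x ∈ J → x ∈ J) ∧ RegChain (J ⊔ Ideal.span {g}) l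

def HomList (l : List (PolyRing r)) : Prop :=
  ∀ g ∈ l, ∃ d, 0 < d ∧ MvPolynomial.IsHomogeneous g d

lemma socle_zero_of_reg {J : Ideal (PolyRing r)} {g : PolyRing r}
    (hg : g ∈ irrelevantIdeal r) (hreg : ∀ x, g * x ∈ J → x ∈ J) :
    ∀ x, (∀ t ∈ irrelevantIdeal r, x * t ∈ J) → x ∈ J := by
  intro x hx
  exact hreg x (by rw [mul_comm]; exact hx g hg)

/-- Key depth-drop lemma. -/
lemma depth_drop : ∀ (n : ℕ) (J : Ideal (PolyRing r)) (a : PolyRing r) (da : ℕ),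
    0 < da → a.IsHomogeneous da → (∀ x, a * x ∈ J → x ∈ J) →
    ∀ l : List (PolyRing r), HomList l → l.length = n + 1 → RegChain J l →
    ∃ l' : List (PolyRing r), HomList l' ∧ l'.length = n ∧
      RegChain (J ⊔ Ideal.span {a}) l' := by
  intro n
  induction n with
  | zero => exact fun J a da _ _ _ l _ _ _ => ⟨[], by intro g hg; simp at hg, rfl, trivial⟩
  | succ n IH =>
    intro J a da hda ha hareg l hl hlen hchain
    match l, hlen with
    | g₀ :: g₁ :: rest, hlen =>
      obtain ⟨hg₀reg, hg₁reg, hchainrest⟩ := hchain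
      obtain ⟨d₀, hd₀, hg₀hom⟩ := hl g₀ (by simp)
      obtain ⟨d₁, hd₁, hg₁hom⟩ := hl g₁ (by simp)
      have hg₀m : g₀ ∈ irrelevantIdeal r := mem_irrelevant_of_hom hd₀ hg₀hom
      have hg₁m : g₁ ∈ irrelevantIdeal r := mem_irrelevant_of_hom hd₁ hg₁hom
      have ham : a ∈ irrelevantIdeal r := mem_irrelevant_of_hom hda ha
      -- socle-zero for J ⊔ (g₀)
      have hsoc₀ : ∀ x, (∀ t ∈ irrelevantIdeal r, x * t ∈ J ⊔ Ideal.span {g₀}) →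
          x ∈ J ⊔ Ideal.span {g₀} := socle_zero_of_reg hg₁m hg₁reg
      -- socle-zero for J ⊔ (a)
      have hsoca : ∀ x, (∀ t ∈ irrelevantIdeal r, x * t ∈ J ⊔ Ideal.span {a}) →
          x ∈ J ⊔ Ideal.span {a} :=
        socle_transfer hg₀reg hareg hg₀m hsoc₀
      -- choose a linear form regular mod both
      obtain ⟨h, hhom1, hm, hregs⟩ := exists_linear_regular
        [J ⊔ Ideal.span {a}, J ⊔ Ideal.span {g₀}] (by
          intro K hk
          rcases List.mem_cons.mp hk with rfl | hk
          · exact hsoca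
          · rcases List.mem_cons.mp hk with rfl | hk
            · exact hsoc₀
            · simp at hk)
      have hrega : ∀ x, h * x ∈ J ⊔ Ideal.span {a} → x ∈ J ⊔ Ideal.span {a} :=
        hregs _ (by simp)
      have hreg₀ : ∀ x, h * x ∈ J ⊔ Ideal.span {g₀} → x ∈ J ⊔ Ideal.span {g₀} :=
        hregs _ (by simp)
      -- IH₁ : chain of length n mod (J ⊔ (g₀)) ⊔ (h)
      obtain ⟨l₁, hl₁hom, hl₁len, hl₁chain⟩ := IH (J ⊔ Ideal.span {g₀}) h 1 one_pos hhom1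
        hreg₀ (g₁ :: rest) (fun g hg => hl g (by simp [hg]))
        (by simpa using hlen) ⟨hg₁reg, hchainrest⟩
      -- chain of length n+1 mod J ⊔ (h) : g₀ :: l₁
      have hg₀h : ∀ x, g₀ * x ∈ J ⊔ Ideal.span {h} → x ∈ J ⊔ Ideal.span {h} :=
        swap_colon_right hg₀reg hreg₀
      have hchainh : RegChain (J ⊔ Ideal.span {h}) (g₀ :: l₁) := by
        refine ⟨hg₀h, ?_⟩
        have : J ⊔ Ideal.span {h} ⊔ Ideal.span {g₀}
            = J ⊔ Ideal.span {g₀} ⊔ Ideal.span {h} := sup_right_comm _ _ _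
        rw [this]
        exact hl₁chain
      -- a is regular mod J ⊔ (h)
      have hah : ∀ x, a * x ∈ J ⊔ Ideal.span {h} → x ∈ J ⊔ Ideal.span {h} :=
        swap_colon_right hareg hrega
      -- IH₂ : chain of length n mod (J ⊔ (h)) ⊔ (a)
      obtain ⟨l₂, hl₂hom, hl₂len, hl₂chain⟩ := IH (J ⊔ Ideal.span {h}) a da hda ha hah
        (g₀ :: l₁) (by
          intro g hg
          rcases List.mem_cons.mp hg with rfl | hg
          · exact ⟨d₀, hd₀, hg₀hom⟩
          · exact hl₁hom g hg)
        (by simp [hl₁len]) hchainh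
      -- final chain : h :: l₂ mod J ⊔ (a)
      refine ⟨h :: l₂, ?_, by simp [hl₂len], ?_⟩
      · intro g hg
        rcases List.mem_cons.mp hg with rfl | hg
        · exact ⟨1, one_pos, hhom1⟩
        · exact hl₂hom g hg
      · refine ⟨hrega, ?_⟩
        have : J ⊔ Ideal.span {a} ⊔ Ideal.span {h}
            = J ⊔ Ideal.span {h} ⊔ Ideal.span {a} := sup_right_comm _ _ _
        rw [this]
        exact hl₂chain

end Depth

section Chain
variable {r : ℕ}

lemma smul_top_ideal {A : Type*} [CommRing A] (J : Ideal A) :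
    (J • (⊤ : Submodule A A)) = (J : Submodule A A) := by
  apply le_antisymm
  · exact Submodule.smul_le.mpr fun j hj t _ => by
      simpa [smul_eq_mul] using J.mul_mem_right t hj
  · intro x hx
    have := Submodule.smul_mem_smul hx (Submodule.mem_top (x := (1 : A)))
    simpa using this

lemma var_chain_aux : ∀ (l : List (Fin (r + 1))) (prev : Set (Fin (r + 1))),
    (∀ i ∈ l, i ∉ prev) → l.Nodup →
    RegChain (Ideal.span ((X : Fin (r+1) → PolyRing r) '' prev)) (l.map X) := by
  intro l
  induction l with
  | nil => intro prev _ _; trivial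
  | cons i l ih =>
    intro prev hdis hnd
    refine ⟨?_, ?_⟩
    · intro x hx
      rw [mem_ideal_span_X_image] at hx ⊢
      intro m hm
      have hm' : Finsupp.single i 1 + m ∈ (X i * x).support := by
        rw [MvPolynomial.mem_support_iff, coeff_X_mul]
        exact MvPolynomial.mem_support_iff.mp hm
      obtain ⟨j, hj, hjm⟩ := hx _ hm'
      refine ⟨j, hj, ?_⟩
      have hji : i ≠ j := fun h => (hdis i (by simp)) (h ▸ hj)
      rwa [Finsupp.add_apply, Finsupp.single_apply, if_neg hji, zero_add] at hjm
    · have hsup : Ideal.span ((X : Fin (r+1) → PolyRing r) '' prev) ⊔ Ideal.span {X i}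
          = Ideal.span ((X : Fin (r+1) → PolyRing r) '' insert i prev) := by
        rw [Set.image_insert_eq, Ideal.span_insert, sup_comm]
      rw [hsup]
      refine ih (insert i prev) ?_ (List.Nodup.of_cons hnd)
      intro j hj hjmem
      rcases Set.mem_insert_iff.mp hjmem with rfl | hjprev
      · exact (List.nodup_cons.mp hnd).1 hj
      · exact hdis j (List.mem_cons_of_mem i hj) hjprev

lemma var_chain : RegChain (⊥ : Ideal (PolyRing r)) (List.ofFn (X : Fin (r+1) → PolyRing r)) := by
  have h0 : (⊥ : Ideal (PolyRing r))
      = Ideal.span ((X : Fin (r+1) → PolyRing r) '' (∅ : Set (Fin (r+1)))) := by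
    simp
  rw [h0, List.ofFn_eq_map]
  exact var_chain_aux (List.finRange (r + 1)) ∅ (by simp) (List.nodup_finRange _)

lemma pcol_of_isRegular {e : ℕ} (f : Fin e → PolyRing r)
    (hreg : RingTheory.Sequence.IsRegular (PolyRing r) (List.ofFn f)) : Pcol f := by
  intro i x hx
  have hilen : (i : ℕ) < (List.ofFn f).length := by simpa using i.2
  have hw := hreg.toIsWeaklyRegular.regular_mod_prev i.val hilen
  have hids : Ideal.ofList ((List.ofFn f).take i.val) = preId f i.val := by
    show Ideal.span _ = Ideal.span _
    congr 1
    ext y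
    simp only [Set.mem_setOf_eq]
    constructor
    · intro hy
      rw [List.mem_iff_getElem] at hy
      obtain ⟨k, hk, hky⟩ := hy
      have hk1 : k < (i : ℕ) ∧ k < e := by
        rw [List.length_take, List.length_ofFn] at hk
        omega
      refine ⟨⟨k, hk1.2⟩, hk1.1, ?_⟩
      rw [← hky, List.getElem_take, List.getElem_ofFn]
    · rintro ⟨j, hj, rfl⟩
      rw [List.mem_iff_getElem]
      refine ⟨j.val, ?_, ?_⟩
      · have h1 := j.2
        have h2 := i.2
        have h3 : (j : ℕ) < (i : ℕ) := hj
        simp only [List.length_take, List.length_ofFn]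
        omega
      · rw [List.getElem_take, List.getElem_ofFn]
  rw [hids, smul_top_ideal] at hw
  have hgi : (List.ofFn f)[(i : ℕ)] = f i := by
    rw [List.getElem_ofFn]
  rw [hgi] at hw
  have hz : f i • (Submodule.Quotient.mk x :
      PolyRing r ⧸ (preId f i.val : Submodule (PolyRing r) (PolyRing r)))
      = f i • (0 : PolyRing r ⧸ (preId f i.val : Submodule (PolyRing r) (PolyRing r))) := by
    rw [smul_zero, ← Submodule.Quotient.mk_smul, smul_eq_mul,
      Submodule.Quotient.mk_eq_zero]
    exact hx
  have := hw hz
  rwa [Submodule.Quotient.mk_eq_zero] at this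

end Chain

section Final
variable {r : ℕ}

lemma preId_zero {e : ℕ} (f : Fin e → PolyRing r) : preId f 0 = ⊥ := by
  unfold preId
  have : f '' {j : Fin e | (j : ℕ) < 0} = ∅ := by
    ext y; simp
  rw [this, Ideal.span_empty]

lemma preId_full {e : ℕ} (f : Fin e → PolyRing r) : preId f e = Ifull f := by
  unfold preId Ifull
  congr 1
  ext y
  constructor
  · rintro ⟨j, _, rfl⟩; exact ⟨j, rfl⟩
  · rintro ⟨j, rfl⟩; exact ⟨j, j.2, rfl⟩

lemma preId_succ {e : ℕ} (f : Fin e → PolyRing r) (k : ℕ) (hk : k < e) :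
    preId f (k + 1) = preId f k ⊔ Ideal.span {f ⟨k, hk⟩} := by
  unfold preId
  have himg : f '' {j : Fin e | (j : ℕ) < k + 1}
      = insert (f ⟨k, hk⟩) (f '' {j : Fin e | (j : ℕ) < k}) := by
    ext y
    constructor
    · rintro ⟨j, hj, rfl⟩
      rcases Nat.lt_succ_iff_lt_or_eq.mp hj with h | h
      · exact Set.mem_insert_of_mem _ ⟨j, h, rfl⟩
      · left
        congr 1
        exact Fin.ext h
    · rintro (rfl | ⟨j, hj, rfl⟩)
      · exact ⟨⟨k, hk⟩, Nat.lt_succ_self k, rfl⟩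
      · exact ⟨j, Nat.lt_succ_of_lt hj, rfl⟩
  rw [himg, Ideal.span_insert, sup_comm]

/-- The main engine: a linear-type regular element for `Ifull f`. -/
lemma exists_regular_elt (e : ℕ) (he : e ≤ r) (f : Fin e → PolyRing r)
    (hhom : ∀ i, ∃ d : ℕ, 0 < d ∧ (f i).IsHomogeneous d)
    (hpcol : Pcol f) :
    ∃ g : PolyRing r, g ∈ irrelevantIdeal r ∧ ∀ x, g * x ∈ Ifull f → x ∈ Ifull f := by
  have hchain : ∀ k : ℕ, k ≤ e → ∃ l' : List (PolyRing r), HomList l' ∧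
      l'.length = r + 1 - k ∧ RegChain (preId f k) l' := by
    intro k
    induction k with
    | zero =>
      intro _
      refine ⟨List.ofFn X, ?_, by simp, ?_⟩
      · intro g hg
        rw [List.mem_ofFn] at hg
        obtain ⟨i, rfl⟩ := hg
        exact ⟨1, one_pos, isHomogeneous_X _ _⟩
      · rw [preId_zero]
        exact var_chain
    | succ k ih =>
      intro hk1
      have hke : k < e := hk1
      obtain ⟨l', h1, h2, h3⟩ := ih (Nat.le_of_succ_le hk1)
      obtain ⟨dk, hdk, hfk⟩ := hhom ⟨k, hke⟩
      have hfreg : ∀ x, f ⟨k, hke⟩ * x ∈ preId f k → x ∈ preId f k := by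
        intro x hx
        exact hpcol ⟨k, hke⟩ x hx
      have hlen : l'.length = (r - k) + 1 := by omega
      obtain ⟨l₂, a1, a2, a3⟩ := depth_drop (r - k) (preId f k) (f ⟨k, hke⟩) dk hdk hfk
        hfreg l' h1 hlen h3
      refine ⟨l₂, a1, by omega, ?_⟩
      rw [preId_succ f k hke]
      exact a3
  obtain ⟨l', hhoml, hlenl, hchainI⟩ := hchain e le_rfl
  have hlpos : 0 < l'.length := by omega
  match l', hlpos, hhoml, hlenl, hchainI with
  | g :: lrest, _, hhoml, hlenl, hchainI =>
    obtain ⟨dg, hdg, hghom⟩ := hhoml g (by simp)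
    refine ⟨g, mem_irrelevant_of_hom hdg hghom, ?_⟩
    rw [← preId_full]
    exact hchainI.1

end Final
end ZariskiCI

open ZariskiCI

theorem complete_intersection_powers_saturated (r e : ℕ) (he : e ≤ r)
    (f : Fin e → PolyRing r)
    (hhom : ∀ i, ∃ d : ℕ, 0 < d ∧ (f i).IsHomogeneous d)
    (hreg : RingTheory.Sequence.IsRegular (PolyRing r) (List.ofFn f))
    (I : Ideal (PolyRing r)) (hI : I = Ideal.span (Set.range f))
    (a : ℕ) (ha : 1 ≤ a) :
    satIdeal (I ^ a) = I ^ a := by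
  subst hI
  have hpcol : Pcol f := pcol_of_isRegular f hreg
  obtain ⟨g, hgm, hgreg⟩ := exists_regular_elt e he f hhom hpcol
  have hK := Klem f g hgreg (qrM e f hpcol)
  have hIfull : Ideal.span (Set.range f) = Ifull f := rfl
  rw [hIfull]
  have hcolon : ∀ k : ℕ, (Ifull f ^ a).colon ((irrelevantIdeal r ^ k : Ideal (PolyRing r)) : Set (PolyRing r)) = Ifull f ^ a := by
    intro k
    induction k with
    | zero =>
      apply le_antisymm
      · intro x hx
        have h1 := Submodule.mem_colon.mp hx 1 (by
          rw [pow_zero, Ideal.one_eq_top]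
          exact Submodule.mem_top)
        simpa using h1
      · intro x hx
        rw [Submodule.mem_colon]
        intro p _
        rw [smul_eq_mul]
        exact Ideal.mul_mem_right p _ hx
    | succ k ih =>
      apply le_antisymm
      · intro x hx
        apply hK a x
        have hgx : g * x ∈ (Ifull f ^ a).colon ((irrelevantIdeal r ^ k : Ideal (PolyRing r)) : Set (PolyRing r)) := by
          rw [Submodule.mem_colon]
          intro p hp
          have hgp : g * p ∈ irrelevantIdeal r ^ (k + 1) := by
            rw [pow_succ']
            exact Ideal.mul_mem_mul hgm hp
          have := Submodule.mem_colon.mp hx (g * p) hgp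
          rw [smul_eq_mul] at this ⊢
          rw [show g * x * p = x * (g * p) by ring]
          exact this
        rwa [ih] at hgx
      · intro x hx
        rw [Submodule.mem_colon]
        intro p _
        rw [smul_eq_mul]
        exact Ideal.mul_mem_right p _ hx
  unfold satIdeal
  rw [iSup_congr hcolon]
  exact iSup_const
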